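/- Let x_1, …, x_N ∈ ℝ^d with N ≥ 1 and β > 0. Define E₁(ξ) = ½·⟨ξ, ξ⟩ and E₂(ξ) = −β⁻¹·log(∑_{i=1}^N exp(β·⟨x_i, ξ⟩)). Then for any x, y ∈ ℝ^d, the CCCP equation ∇E₁(y) = −∇E₂(x) holds if and only if y = ∑_{i=1}^N softmax(β·Xᵀx)_i · x_i; i.e., the CCCP applied to the Hopfield energy E = E₁ + E₂ produces exactly the update rule ξ^{t+1} = X·softmax(β·Xᵀξ^t). -/

import Mathlib

open scoped RealInnerProductSpace

section Aux
variable {F : Type*} [NormedAddCommGroup F] [InnerProductSpace ℝ F] [CompleteSpace F]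

lemma grad_half_sq (b : F) : HasGradientAt (fun ξ : F => (1/2 : ℝ) * ⟪ξ, ξ⟫) b b := by
  rw [hasGradientAt_iff_hasFDerivAt]
  have h := ((hasFDerivAt_id b).inner ℝ (hasFDerivAt_id b)).const_mul (1/2 : ℝ)
  refine h.congr_fderiv ?_
  ext v
  simp [fderivInnerCLM, real_inner_comm]
  ring

lemma grad_lse {N : ℕ} (hN : 1 ≤ N) (β : ℝ) (hβ : 0 < β) (x : Fin N → F) (a : F) :
    HasGradientAt (fun ξ : F => -(β⁻¹ * Real.log (∑ i, Real.exp (β * ⟪x i, ξ⟫))))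
      (-∑ i, (Real.exp (β * ⟪x i, a⟫) / ∑ m, Real.exp (β * ⟪x m, a⟫)) • x i) a := by
  rw [hasGradientAt_iff_hasFDerivAt]
  have hS : 0 < ∑ m, Real.exp (β * ⟪x m, a⟫) :=
    Finset.sum_pos (fun i _ => Real.exp_pos _) ⟨⟨0, hN⟩, Finset.mem_univ _⟩
  have hi : ∀ i : Fin N, HasFDerivAt (fun ξ : F => Real.exp (β * ⟪x i, ξ⟫))
      ((Real.exp (β * ⟪x i, a⟫) * β) • innerSL ℝ (x i)) a := by
    intro i
    have h1 : HasFDerivAt (fun ξ : F => β * ⟪x i, ξ⟫) (β • innerSL ℝ (x i)) a :=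
      ((innerSL ℝ (x i)).hasFDerivAt).const_mul β
    have h2 := (Real.hasDerivAt_exp (β * ⟪x i, a⟫)).comp_hasFDerivAt a h1
    refine h2.congr_fderiv ?_
    ext v
    simp [mul_comm]
    ring
  have hsum : HasFDerivAt (fun ξ : F => ∑ i, Real.exp (β * ⟪x i, ξ⟫))
      (∑ i, (Real.exp (β * ⟪x i, a⟫) * β) • innerSL ℝ (x i)) a :=
    HasFDerivAt.fun_sum (fun i _ => hi i)
  have hlog := (Real.hasDerivAt_log hS.ne').comp_hasFDerivAt a hsum
  have hfinal := (hlog.const_mul β⁻¹).neg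
  refine hfinal.congr_fderiv ?_
  ext v
  simp only [LinearIsometryEquiv.coe_coe, InnerProductSpace.toDual_apply_apply,
    ContinuousLinearMap.neg_apply, ContinuousLinearMap.smul_apply,
    ContinuousLinearMap.coe_sum', Finset.sum_apply, innerSL_apply_apply,
    smul_eq_mul, inner_neg_left, sum_inner, real_inner_smul_left, neg_inj,
    Finset.mul_sum]
  refine Finset.sum_congr rfl fun i _ => ?_
  field_simp

end Aux

/-- For `E₁(ξ) = ½·⟨ξ,ξ⟩` and `E₂(ξ) = −β⁻¹·log(∑ᵢ exp(β·⟨xᵢ,ξ⟩))`, the CCCP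
equation `∇E₁(y) = −∇E₂(x)` holds iff `y = ∑ᵢ softmax(β·Xᵀx)ᵢ • xᵢ`; i.e. the
CCCP applied to the Hopfield energy produces exactly the update rule
`ξ^{t+1} = X·softmax(β·Xᵀξ^t)`. -/
theorem cccp_hopfield_update_rule
    (N d : ℕ) (hN : 1 ≤ N) (β : ℝ) (hβ : 0 < β)
    (x : Fin N → EuclideanSpace ℝ (Fin d))
    (E₁ E₂ : EuclideanSpace ℝ (Fin d) → ℝ)
    (hE₁ : E₁ = fun ξ => (1 / 2) * ⟪ξ, ξ⟫)
    (hE₂ : E₂ = fun ξ =>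
      -(β⁻¹ * Real.log (∑ i, Real.exp (β * ⟪x i, ξ⟫)))) :
    ∀ a b : EuclideanSpace ℝ (Fin d),
      gradient E₁ b = -gradient E₂ a ↔
        b = ∑ i, (Real.exp (β * ⟪x i, a⟫) /
          ∑ m, Real.exp (β * ⟪x m, a⟫)) • x i := by
  intro a b
  have h1 : gradient E₁ b = b := by
    rw [hE₁]; exact (grad_half_sq b).gradient
  have h2 : gradient E₂ a
      = -∑ i, (Real.exp (β * ⟪x i, a⟫) / ∑ m, Real.exp (β * ⟪x m, a⟫)) • x i := by
    rw [hE₂]; exact (grad_lse hN β hβ x a).gradient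
  rw [h1, h2, neg_neg]
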